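/- The decomposition of the Melikyan algebra M(2;n) given by M_{3(a_1,a_2)} = Span{x^(a+ε_i)∂_i : i = 1,2}, M_{(3a_1,3a_2)+(1,1)} = Span{x^(a+ε_i)∂̃_i : i = 1,2}, and M_{(3a_1,3a_2)−(1,1)} = Span{x^(a)}, over all multi-indices a, is a ℤ²-grading of the Lie algebra M(2;n): [M_b, M_c] ⊆ M_{b+c} for all b, c ∈ ℤ². -/

import Mathlib

attribute [local instance] Classical.propDecidable

noncomputable section

def Box (p : ℕ) {m : ℕ} (n : Fin m → ℕ) : Type :=
  {a : Fin m → ℕ // ∀ i, a i ≤ p ^ n i - 1}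

abbrev DivO (p : ℕ) {m : ℕ} (n : Fin m → ℕ) (F : Type*) [Field F] : Type _ :=
  Box p n →₀ F

variable {p : ℕ} {m : ℕ} {n : Fin m → ℕ} {F : Type*} [Field F]

def omul (f g : DivO p n F) : DivO p n F :=
  f.sum fun a fa => g.sum fun b gb =>
    if h : ∀ i, a.1 i + b.1 i ≤ p ^ n i - 1 then
      Finsupp.single (⟨fun i => a.1 i + b.1 i, h⟩ : Box p n)
        (((∏ i, Nat.choose (a.1 i + b.1 i) (a.1 i) : ℕ) : F) * fa * gb)
    else 0

def dpartial (k : Fin m) (f : DivO p n F) : DivO p n F :=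
  f.sum fun a fa =>
    if a.1 k ≠ 0 then
      Finsupp.single (⟨fun i => a.1 i - (if i = k then 1 else 0),
        fun i => le_trans (Nat.sub_le _ _) (a.2 i)⟩ : Box p n) fa
    else 0

abbrev WittV (p : ℕ) {m : ℕ} (n : Fin m → ℕ) (F : Type*) [Field F] : Type _ :=
  Fin m → DivO p n F

def wact (D : WittV p n F) (f : DivO p n F) : DivO p n F :=
  ∑ i, omul (D i) (dpartial i f)

def wbr (D E : WittV p n F) : WittV p n F :=
  fun j => ∑ i, (omul (D i) (dpartial i (E j)) - omul (E i) (dpartial i (D j)))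

def wdiv (D : WittV p n F) : DivO p n F :=
  ∑ i, dpartial i (D i)

/-- The Melikyan algebra `M(2;n) = O(2;n) ⊕ W(2;n) ⊕ W̃(2;n)` as a vector space:
a triple `(f, D, Ẽ)`. -/
abbrev MelV (n : Fin 2 → ℕ) (F : Type*) [Field F] : Type _ :=
  DivO 5 n F × WittV 5 n F × WittV 5 n F

variable {n : Fin 2 → ℕ}

/-- The tilde part of `[f, g]`:
`2(f ∂_1 g - g ∂_1 f) ∂̃_2 + 2(g ∂_2 f - f ∂_2 g) ∂̃_1`. -/
def tld (f g : DivO 5 n F) : WittV 5 n F := fun j =>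
  if j = 0 then (2 : F) • (omul g (dpartial 1 f) - omul f (dpartial 1 g))
  else (2 : F) • (omul f (dpartial 0 g) - omul g (dpartial 0 f))

/-- The Melikyan bracket, given by the five structural equations. -/
def mbr (y z : MelV n F) : MelV n F :=
  ( -- O(2;n)-component
    (wact y.2.1 z.1 - (2 : F) • omul (wdiv y.2.1) z.1)
      - (wact z.2.1 y.1 - (2 : F) • omul (wdiv z.2.1) y.1)
      + (omul (y.2.2 0) (z.2.2 1) - omul (y.2.2 1) (z.2.2 0)),
    -- W(2;n)-component
    wbr y.2.1 z.2.1 + (fun i => omul y.1 (z.2.2 i)) - (fun i => omul z.1 (y.2.2 i)),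
    -- W̃(2;n)-component
    (fun i => wbr y.2.1 z.2.2 i + (2 : F) • omul (wdiv y.2.1) (z.2.2 i))
      - (fun i => wbr z.2.1 y.2.2 i + (2 : F) • omul (wdiv z.2.1) (y.2.2 i))
      + tld y.1 z.1 )

/-- degree (in `ℤ²`, grading `Γ̄_M`) of the basis element `x^(a)` of the `O`-part:
`3a - (1,1)`. -/
def degO (a : Box 5 n) : ℤ × ℤ :=
  (3 * (a.1 0 : ℤ) - 1, 3 * (a.1 1 : ℤ) - 1)

/-- degree of the basis element `x^(a) ∂_i` of the `W`-part: `3(a - ε_i)`. -/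
def degW (a : Box 5 n) (i : Fin 2) : ℤ × ℤ :=
  (3 * ((a.1 0 : ℤ) - if i = 0 then 1 else 0),
   3 * ((a.1 1 : ℤ) - if i = 1 then 1 else 0))

/-- degree of the basis element `x^(a) ∂̃_i` of the `W̃`-part: `3(a - ε_i) + (1,1)`. -/
def degT (a : Box 5 n) (i : Fin 2) : ℤ × ℤ :=
  ((degW a i).1 + 1, (degW a i).2 + 1)

/-- The homogeneous component of degree `b ∈ ℤ²` of the grading `Γ̄_M`. -/
def MHom (F : Type*) [Field F] (n : Fin 2 → ℕ) (b : ℤ × ℤ) : Submodule F (MelV n F) :=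
  (Finsupp.supported F F {a | degO a = b}).prod
    ((Submodule.pi Set.univ fun i => Finsupp.supported F F {a | degW a i = b}).prod
      (Submodule.pi Set.univ fun i => Finsupp.supported F F {a | degT a i = b}))

/-- The homogeneous component of degree `i ∈ ℤ` of the canonical `ℤ`-grading. -/
def MHomZ (F : Type*) [Field F] (n : Fin 2 → ℕ) (d : ℤ) : Submodule F (MelV n F) :=
  (Finsupp.supported F F {a : Box 5 n | 3 * ((a.1 0 : ℤ) + (a.1 1 : ℤ)) - 2 = d}).prod
    ((Submodule.pi Set.univ fun _ =>
        Finsupp.supported F F {a : Box 5 n | 3 * (((a.1 0 : ℤ) + (a.1 1 : ℤ)) - 1) = d}).prod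
      (Submodule.pi Set.univ fun _ =>
        Finsupp.supported F F {a : Box 5 n | 3 * (((a.1 0 : ℤ) + (a.1 1 : ℤ)) - 1) + 2 = d}))

end


noncomputable section Aux

open Finsupp

variable {p : ℕ} {m : ℕ} {F : Type*} [Field F]

lemma omul_mem {n : Fin m → ℕ} {f g : DivO p n F} {s t r : Set (Box p n)}
    (hf : f ∈ Finsupp.supported F F s) (hg : g ∈ Finsupp.supported F F t)
    (h : ∀ a ∈ s, ∀ b ∈ t, ∀ x : Box p n, (∀ i, x.1 i = a.1 i + b.1 i) → x ∈ r) :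
    omul f g ∈ Finsupp.supported F F r := by
  rw [Finsupp.mem_supported] at hf hg
  unfold omul
  apply Submodule.finsuppSum_mem
  intro a ha
  apply Submodule.finsuppSum_mem
  intro b hb
  split
  · exact Finsupp.single_mem_supported F _
      (h a (hf (Finsupp.mem_support_iff.2 ha)) b (hg (Finsupp.mem_support_iff.2 hb)) _
        fun i => rfl)
  · exact Submodule.zero_mem _

lemma dpartial_mem {n : Fin m → ℕ} {k : Fin m} {f : DivO p n F} {s r : Set (Box p n)}
    (hf : f ∈ Finsupp.supported F F s)
    (h : ∀ a ∈ s, a.1 k ≠ 0 → ∀ x : Box p n,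
      (∀ i, x.1 i = a.1 i - if i = k then 1 else 0) → x ∈ r) :
    dpartial k f ∈ Finsupp.supported F F r := by
  rw [Finsupp.mem_supported] at hf
  unfold dpartial
  apply Submodule.finsuppSum_mem
  intro a ha
  split
  · next hak =>
      exact Finsupp.single_mem_supported F _
        (h a (hf (Finsupp.mem_support_iff.2 ha)) hak _ fun i => rfl)
  · exact Submodule.zero_mem _

lemma omul_dpartial_mem {n : Fin m → ℕ} (k : Fin m) {f g : DivO p n F} {s t r : Set (Box p n)}
    (hf : f ∈ Finsupp.supported F F s) (hg : g ∈ Finsupp.supported F F t)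
    (h : ∀ a ∈ s, ∀ b ∈ t, b.1 k ≠ 0 → ∀ x : Box p n,
      (∀ i, (x.1 i : ℤ) = a.1 i + b.1 i - if i = k then 1 else 0) → x ∈ r) :
    omul f (dpartial k g) ∈ Finsupp.supported F F r := by
  refine omul_mem hf (dpartial_mem hg
      (r := {x : Box p n | ∃ b ∈ t, b.1 k ≠ 0 ∧
        ∀ i, (x.1 i : ℤ) = (b.1 i : ℤ) - if i = k then 1 else 0}) ?_) ?_
  · intro a ha hak x hx
    refine ⟨a, ha, hak, fun i => ?_⟩
    have h1 := hx i
    split_ifs at h1 ⊢ with hik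
    · subst hik; omega
    · omega
  · rintro a ha x' ⟨b, hb, hbk, hx'⟩ x hx
    refine h a ha b hb hbk x fun i => ?_
    have h1 := hx i
    have h2 := hx' i
    split_ifs at h2 ⊢ <;> omega

variable {n : Fin 2 → ℕ}

lemma mem_MHom_iff {b : ℤ × ℤ} {y : MelV n F} :
    y ∈ MHom F n b ↔ y.1 ∈ Finsupp.supported F F {a | degO a = b} ∧
      (∀ i, y.2.1 i ∈ Finsupp.supported F F {a | degW a i = b}) ∧
      (∀ i, y.2.2 i ∈ Finsupp.supported F F {a | degT a i = b}) := by
  simp [MHom, Submodule.mem_prod, Submodule.mem_pi]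

lemma wdiv_mem {D : WittV 5 n F} {b : ℤ × ℤ}
    (hD : ∀ i, D i ∈ Finsupp.supported F F {a | degW a i = b}) :
    wdiv D ∈ Finsupp.supported F F
      {a : Box 5 n | (3 * (a.1 0 : ℤ), 3 * (a.1 1 : ℤ)) = b} := by
  unfold wdiv
  refine Submodule.sum_mem _ fun i _ => dpartial_mem (hD i) ?_
  intro a ha hak x hx
  have h0 := hx 0; have h1 := hx 1
  simp only [Set.mem_setOf_eq, degW, Prod.ext_iff] at ha ⊢
  fin_cases i <;> simp at h0 h1 ha hak ⊢ <;> omega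

lemma wact_memO {D : WittV 5 n F} {f : DivO 5 n F} {b c : ℤ × ℤ}
    (hD : ∀ i, D i ∈ Finsupp.supported F F {a | degW a i = b})
    (hf : f ∈ Finsupp.supported F F {a | degO a = c}) :
    wact D f ∈ Finsupp.supported F F {a | degO a = b + c} := by
  unfold wact
  refine Submodule.sum_mem _ fun i _ => omul_dpartial_mem i (hD i) hf ?_
  intro a ha bb hbb hbk x hx
  have h0 := hx 0; have h1 := hx 1
  simp only [Set.mem_setOf_eq, degO, degW, Prod.ext_iff, Prod.fst_add, Prod.snd_add] at ha hbb ⊢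
  fin_cases i <;> simp at h0 h1 ha hbb ⊢ <;> omega

lemma omul_wdiv_memO {D : WittV 5 n F} {f : DivO 5 n F} {b c : ℤ × ℤ}
    (hD : ∀ i, D i ∈ Finsupp.supported F F {a | degW a i = b})
    (hf : f ∈ Finsupp.supported F F {a | degO a = c}) :
    omul (wdiv D) f ∈ Finsupp.supported F F {a | degO a = b + c} := by
  refine omul_mem (wdiv_mem hD) hf ?_
  intro a ha bb hbb x hx
  have h0 := hx 0; have h1 := hx 1
  simp only [Set.mem_setOf_eq, degO, Prod.ext_iff, Prod.fst_add, Prod.snd_add] at ha hbb ⊢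
  omega

lemma omul_TT_memO {f g : DivO 5 n F} {b c : ℤ × ℤ} {i j : Fin 2} (hij : i ≠ j)
    (hf : f ∈ Finsupp.supported F F {a | degT a i = b})
    (hg : g ∈ Finsupp.supported F F {a | degT a j = c}) :
    omul f g ∈ Finsupp.supported F F {a | degO a = b + c} := by
  refine omul_mem hf hg ?_
  intro a ha bb hbb x hx
  have h0 := hx 0; have h1 := hx 1
  simp only [Set.mem_setOf_eq, degO, degT, degW, Prod.ext_iff, Prod.fst_add, Prod.snd_add]
    at ha hbb ⊢
  fin_cases i <;> fin_cases j <;> simp_all <;> omega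

lemma wbr_memW {D E : WittV 5 n F} {b c : ℤ × ℤ} (j : Fin 2)
    (hD : ∀ i, D i ∈ Finsupp.supported F F {a | degW a i = b})
    (hE : ∀ i, E i ∈ Finsupp.supported F F {a | degW a i = c}) :
    wbr D E j ∈ Finsupp.supported F F {a | degW a j = b + c} := by
  unfold wbr
  refine Submodule.sum_mem _ fun i _ => sub_mem ?_ ?_
  · refine omul_dpartial_mem i (hD i) (hE j) ?_
    intro a ha bb hbb hbk x hx
    have h0 := hx 0; have h1 := hx 1
    simp only [Set.mem_setOf_eq, degW, Prod.ext_iff, Prod.fst_add, Prod.snd_add] at ha hbb ⊢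
    fin_cases i <;> fin_cases j <;> simp at h0 h1 ha hbb ⊢ <;> omega
  · refine omul_dpartial_mem i (hE i) (hD j) ?_
    intro a ha bb hbb hbk x hx
    have h0 := hx 0; have h1 := hx 1
    simp only [Set.mem_setOf_eq, degW, Prod.ext_iff, Prod.fst_add, Prod.snd_add] at ha hbb ⊢
    fin_cases i <;> fin_cases j <;> simp at h0 h1 ha hbb ⊢ <;> omega

lemma omul_OT_memW {f : DivO 5 n F} {E : WittV 5 n F} {b c : ℤ × ℤ} (j : Fin 2)
    (hf : f ∈ Finsupp.supported F F {a | degO a = b})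
    (hE : E j ∈ Finsupp.supported F F {a | degT a j = c}) :
    omul f (E j) ∈ Finsupp.supported F F {a | degW a j = b + c} := by
  refine omul_mem hf hE ?_
  intro a ha bb hbb x hx
  have h0 := hx 0; have h1 := hx 1
  simp only [Set.mem_setOf_eq, degO, degT, degW, Prod.ext_iff, Prod.fst_add, Prod.snd_add]
    at ha hbb ⊢
  fin_cases j <;> simp at h0 h1 ha hbb ⊢ <;> omega

lemma wbr_memT {D E : WittV 5 n F} {b c : ℤ × ℤ} (j : Fin 2)
    (hD : ∀ i, D i ∈ Finsupp.supported F F {a | degW a i = b})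
    (hE : ∀ i, E i ∈ Finsupp.supported F F {a | degT a i = c}) :
    wbr D E j ∈ Finsupp.supported F F {a | degT a j = b + c} := by
  unfold wbr
  refine Submodule.sum_mem _ fun i _ => sub_mem ?_ ?_
  · refine omul_dpartial_mem i (hD i) (hE j) ?_
    intro a ha bb hbb hbk x hx
    have h0 := hx 0; have h1 := hx 1
    simp only [Set.mem_setOf_eq, degW, degT, Prod.ext_iff, Prod.fst_add, Prod.snd_add]
      at ha hbb ⊢
    fin_cases i <;> fin_cases j <;> simp at h0 h1 ha hbb ⊢ <;> omega
  · refine omul_dpartial_mem i (hE i) (hD j) ?_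
    intro a ha bb hbb hbk x hx
    have h0 := hx 0; have h1 := hx 1
    simp only [Set.mem_setOf_eq, degW, degT, Prod.ext_iff, Prod.fst_add, Prod.snd_add]
      at ha hbb ⊢
    fin_cases i <;> fin_cases j <;> simp at h0 h1 ha hbb ⊢ <;> omega

lemma omul_wdiv_memT {D E : WittV 5 n F} {b c : ℤ × ℤ} (j : Fin 2)
    (hD : ∀ i, D i ∈ Finsupp.supported F F {a | degW a i = b})
    (hE : E j ∈ Finsupp.supported F F {a | degT a j = c}) :
    omul (wdiv D) (E j) ∈ Finsupp.supported F F {a | degT a j = b + c} := by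
  refine omul_mem (wdiv_mem hD) hE ?_
  intro a ha bb hbb x hx
  have h0 := hx 0; have h1 := hx 1
  simp only [Set.mem_setOf_eq, degT, degW, Prod.ext_iff, Prod.fst_add, Prod.snd_add]
    at ha hbb ⊢
  fin_cases j <;> simp at h0 h1 ha hbb ⊢ <;> omega

lemma omul_Odp_memT {f g : DivO 5 n F} {b c : ℤ × ℤ} (j k : Fin 2) (hjk : j ≠ k)
    (hf : f ∈ Finsupp.supported F F {a | degO a = b})
    (hg : g ∈ Finsupp.supported F F {a | degO a = c}) :
    omul f (dpartial k g) ∈ Finsupp.supported F F {a | degT a j = b + c} := by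
  refine omul_dpartial_mem k hf hg ?_
  intro a ha bb hbb hbk x hx
  have h0 := hx 0; have h1 := hx 1
  simp only [Set.mem_setOf_eq, degO, degT, degW, Prod.ext_iff, Prod.fst_add, Prod.snd_add]
    at ha hbb ⊢
  fin_cases j <;> fin_cases k <;> simp_all <;> omega

lemma tld_memT {f g : DivO 5 n F} {b c : ℤ × ℤ} (j : Fin 2)
    (hf : f ∈ Finsupp.supported F F {a | degO a = b})
    (hg : g ∈ Finsupp.supported F F {a | degO a = c}) :
    tld f g j ∈ Finsupp.supported F F {a | degT a j = b + c} := by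
  unfold tld
  rcases eq_or_ne j 0 with hj | hj
  · rw [if_pos hj]
    subst hj
    refine Submodule.smul_mem _ _ (sub_mem ?_ ?_)
    · have := omul_Odp_memT (f := g) (g := f) (b := c) (c := b) 0 1 (by decide) hg hf
      rwa [add_comm c b] at this
    · exact omul_Odp_memT 0 1 (by decide) hf hg
  · rw [if_neg hj]
    have hj1 : j = 1 := Fin.eq_one_of_ne_zero j hj
    subst hj1
    refine Submodule.smul_mem _ _ (sub_mem ?_ ?_)
    · exact omul_Odp_memT 1 0 (by decide) hf hg
    · have := omul_Odp_memT (f := g) (g := f) (b := c) (c := b) 1 0 (by decide) hg hf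
      rwa [add_comm c b] at this

lemma zero_of_mem_supported_disjoint {α : Type*} {f : α →₀ F} {s t : Set α}
    (hf : f ∈ Finsupp.supported F F s) (hg : f ∈ Finsupp.supported F F t)
    (hst : ∀ x, x ∈ s → x ∈ t → False) : f = 0 := by
  rw [Finsupp.mem_supported] at hf hg
  ext a
  by_contra h
  exact hst a (hf (Finsupp.mem_support_iff.2 h)) (hg (Finsupp.mem_support_iff.2 h))

end Aux

noncomputable section Main

variable {F : Type*} [Field F] {n : Fin 2 → ℕ}

lemma pi_single_sum (i : Fin 2) (g : DivO 5 n F) :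
    Pi.single (M := fun _ : Fin 2 => DivO 5 n F) i g
      = ∑ a ∈ g.support, Pi.single i (Finsupp.single a (g a)) := by
  funext j
  rw [Finset.sum_apply]
  by_cases h : j = i
  · subst h
    simp only [Pi.single_eq_same]
    exact (Finsupp.sum_single g).symm
  · simp [Pi.single_eq_of_ne h]

lemma memO_iSup (f : DivO 5 n F) :
    ((f, 0, 0) : MelV n F) ∈ ⨆ b, MHom F n b := by
  have hrep : ((f, 0, 0) : MelV n F)
      = ∑ a ∈ f.support,
          ((Finsupp.single a (f a) : DivO 5 n F), (0 : WittV 5 n F), (0 : WittV 5 n F)) := by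
    refine Prod.ext ?_ (Prod.ext ?_ ?_)
    · simp only [Prod.fst_sum]
      exact (Finsupp.sum_single f).symm
    · simp [Prod.snd_sum, Prod.fst_sum]
    · simp [Prod.snd_sum]
  rw [hrep]
  refine Submodule.sum_mem _ fun a _ => ?_
  refine (le_iSup (fun b => MHom F n b) (degO a)) (mem_MHom_iff.2 ⟨?_, ?_, ?_⟩)
  · exact Finsupp.single_mem_supported F _ rfl
  · exact fun i => Submodule.zero_mem _
  · exact fun i => Submodule.zero_mem _

lemma memW_iSup_single (i : Fin 2) (g : DivO 5 n F) :
    ((0, Pi.single i g, 0) : MelV n F) ∈ ⨆ b, MHom F n b := by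
  have hrep : ((0, Pi.single i g, 0) : MelV n F)
      = ∑ a ∈ g.support,
          ((0 : DivO 5 n F), Pi.single i (Finsupp.single a (g a)), (0 : WittV 5 n F)) := by
    refine Prod.ext ?_ (Prod.ext ?_ ?_)
    · simp [Prod.fst_sum]
    · simp only [Prod.snd_sum, Prod.fst_sum]
      exact pi_single_sum i g
    · simp [Prod.snd_sum]
  rw [hrep]
  refine Submodule.sum_mem _ fun a _ => ?_
  refine (le_iSup (fun b => MHom F n b) (degW a i)) (mem_MHom_iff.2 ⟨?_, ?_, ?_⟩)
  · exact Submodule.zero_mem _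
  · intro j
    by_cases h : j = i
    · subst h
      simp only [Pi.single_eq_same]
      exact Finsupp.single_mem_supported F _ rfl
    · simp only [Pi.single_eq_of_ne h]
      exact Submodule.zero_mem _
  · exact fun j => Submodule.zero_mem _

lemma memT_iSup_single (i : Fin 2) (g : DivO 5 n F) :
    ((0, 0, Pi.single i g) : MelV n F) ∈ ⨆ b, MHom F n b := by
  have hrep : ((0, 0, Pi.single i g) : MelV n F)
      = ∑ a ∈ g.support,
          ((0 : DivO 5 n F), (0 : WittV 5 n F), Pi.single i (Finsupp.single a (g a))) := by
    refine Prod.ext ?_ (Prod.ext ?_ ?_)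
    · simp [Prod.fst_sum]
    · simp [Prod.snd_sum, Prod.fst_sum]
    · simp only [Prod.snd_sum]
      exact pi_single_sum i g
  rw [hrep]
  refine Submodule.sum_mem _ fun a _ => ?_
  refine (le_iSup (fun b => MHom F n b) (degT a i)) (mem_MHom_iff.2 ⟨?_, ?_, ?_⟩)
  · exact Submodule.zero_mem _
  · exact fun j => Submodule.zero_mem _
  · intro j
    by_cases h : j = i
    · subst h
      simp only [Pi.single_eq_same]
      exact Finsupp.single_mem_supported F _ rfl
    · simp only [Pi.single_eq_of_ne h]
      exact Submodule.zero_mem _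

end Main

/-- The decomposition of the Melikyan algebra `M(2;n)` with components
`M_{3a} = Span{x^(a+ε_i)∂_i}`, `M_{3a+(1,1)} = Span{x^(a+ε_i)∂̃_i}`,
`M_{3a-(1,1)} = Span{x^(a)}` is a `ℤ²`-grading of the Lie algebra `M(2;n)`:
it is a direct sum decomposition and `[M_b, M_c] ⊆ M_{b+c}` for all `b, c ∈ ℤ²`. -/
theorem melikyan_Z2_grading {n : Fin 2 → ℕ} (hn : ∀ i, 1 ≤ n i)
    {F : Type*} [Field F] [IsAlgClosed F] [CharP F 5] :
    DirectSum.IsInternal (fun b : ℤ × ℤ => MHom F n b) ∧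
    ∀ (b c : ℤ × ℤ) (y z : MelV n F),
      y ∈ MHom F n b → z ∈ MHom F n c → mbr y z ∈ MHom F n (b + c) := by
  have hbr : ∀ (b c : ℤ × ℤ) (y z : MelV n F),
      y ∈ MHom F n b → z ∈ MHom F n c → mbr y z ∈ MHom F n (b + c) := by
    intro b c y z hy hz
    rw [mem_MHom_iff] at hy hz
    obtain ⟨hyO, hyW, hyT⟩ := hy
    obtain ⟨hzO, hzW, hzT⟩ := hz
    rw [mem_MHom_iff]
    refine ⟨?_, ?_, ?_⟩
    · show (wact y.2.1 z.1 - (2:F) • omul (wdiv y.2.1) z.1)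
          - (wact z.2.1 y.1 - (2:F) • omul (wdiv z.2.1) y.1)
          + (omul (y.2.2 0) (z.2.2 1) - omul (y.2.2 1) (z.2.2 0)) ∈ _
      refine add_mem (sub_mem (sub_mem ?_ ?_) (sub_mem ?_ ?_)) (sub_mem ?_ ?_)
      · exact wact_memO hyW hzO
      · exact Submodule.smul_mem _ _ (omul_wdiv_memO hyW hzO)
      · have := wact_memO hzW hyO
        rwa [add_comm c b] at this
      · have := Submodule.smul_mem _ (2:F) (omul_wdiv_memO hzW hyO)
        rwa [add_comm c b] at this
      · exact omul_TT_memO (by decide) (hyT 0) (hzT 1)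
      · exact omul_TT_memO (by decide) (hyT 1) (hzT 0)
    · intro j
      show (wbr y.2.1 z.2.1 + (fun i => omul y.1 (z.2.2 i)) - fun i => omul z.1 (y.2.2 i)) j ∈ _
      simp only [Pi.add_apply, Pi.sub_apply]
      refine sub_mem (add_mem ?_ ?_) ?_
      · exact wbr_memW j hyW hzW
      · exact omul_OT_memW j hyO (hzT j)
      · have := omul_OT_memW j hzO (hyT j)
        rwa [add_comm c b] at this
    · intro j
      show ((fun i => wbr y.2.1 z.2.2 i + (2:F) • omul (wdiv y.2.1) (z.2.2 i))
          - (fun i => wbr z.2.1 y.2.2 i + (2:F) • omul (wdiv z.2.1) (y.2.2 i))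
          + tld y.1 z.1) j ∈ _
      simp only [Pi.add_apply, Pi.sub_apply]
      refine add_mem (sub_mem (add_mem ?_ ?_) (add_mem ?_ ?_)) ?_
      · exact wbr_memT j hyW hzT
      · exact Submodule.smul_mem _ _ (omul_wdiv_memT j hyW (hzT j))
      · have := wbr_memT j hzW hyT
        rwa [add_comm c b] at this
      · have := Submodule.smul_mem _ (2:F) (omul_wdiv_memT j hzW (hyT j))
        rwa [add_comm c b] at this
      · exact tld_memT j hyO hzO
  refine ⟨?_, hbr⟩
  rw [DirectSum.isInternal_submodule_iff_iSupIndep_and_iSup_eq_top]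
  constructor
  · intro b
    rw [Submodule.disjoint_def]
    intro x hxb hxr
    have hle : (⨆ c, ⨆ (_ : c ≠ b), MHom F n c) ≤
        (Finsupp.supported F F {a : Box 5 n | degO a ≠ b}).prod
          ((Submodule.pi Set.univ fun i => Finsupp.supported F F {a | degW a i ≠ b}).prod
            (Submodule.pi Set.univ fun i => Finsupp.supported F F {a | degT a i ≠ b})) := by
      refine iSup_le fun c => iSup_le fun hc => ?_
      intro v hv
      rw [mem_MHom_iff] at hv
      refine Submodule.mem_prod.2 ⟨Finsupp.supported_mono ?_ hv.1, Submodule.mem_prod.2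
        ⟨Submodule.mem_pi.2 fun i _ => Finsupp.supported_mono ?_ (hv.2.1 i),
         Submodule.mem_pi.2 fun i _ => Finsupp.supported_mono ?_ (hv.2.2 i)⟩⟩
      · intro a ha h
        refine hc ?_
        have ha' : degO a = c := ha
        rw [← ha']; exact h
      · intro a ha h
        refine hc ?_
        have ha' : degW a i = c := ha
        rw [← ha']; exact h
      · intro a ha h
        refine hc ?_
        have ha' : degT a i = c := ha
        rw [← ha']; exact h
    rw [mem_MHom_iff] at hxb
    obtain ⟨h1, h2, h3⟩ := hxb
    have hBig := hle hxr
    have h1' := (Submodule.mem_prod.1 hBig).1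
    have h2' := (Submodule.mem_prod.1 (Submodule.mem_prod.1 hBig).2).1
    have h3' := (Submodule.mem_prod.1 (Submodule.mem_prod.1 hBig).2).2
    have e1 : x.1 = 0 :=
      zero_of_mem_supported_disjoint h1 h1' (fun a ha hb => hb ha)
    have e2 : x.2.1 = 0 := funext fun i =>
      zero_of_mem_supported_disjoint (h2 i)
        (Submodule.mem_pi.1 h2' i (Set.mem_univ i)) (fun a ha hb => hb ha)
    have e3 : x.2.2 = 0 := funext fun i =>
      zero_of_mem_supported_disjoint (h3 i)
        (Submodule.mem_pi.1 h3' i (Set.mem_univ i)) (fun a ha hb => hb ha)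
    exact Prod.ext e1 (Prod.ext e2 e3)
  · rw [eq_top_iff]
    rintro ⟨f, D, E⟩ -
    have hD : ((0, D, 0) : MelV n F) ∈ ⨆ b, MHom F n b := by
      have : ((0, D, 0) : MelV n F)
          = (0, (Pi.single 0 (D 0) : WittV 5 n F), 0) + (0, (Pi.single 1 (D 1) : WittV 5 n F), 0) := by
        refine Prod.ext (by simp) (Prod.ext ?_ (by simp))
        funext j
        fin_cases j <;> simp [Pi.single_apply]
      rw [this]
      exact add_mem (memW_iSup_single 0 (D 0)) (memW_iSup_single 1 (D 1))
    have hE : ((0, 0, E) : MelV n F) ∈ ⨆ b, MHom F n b := by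
      have : ((0, 0, E) : MelV n F)
          = (0, 0, (Pi.single 0 (E 0) : WittV 5 n F)) + (0, 0, (Pi.single 1 (E 1) : WittV 5 n F)) := by
        refine Prod.ext (by simp) (Prod.ext (by simp) ?_)
        funext j
        fin_cases j <;> simp [Pi.single_apply]
      rw [this]
      exact add_mem (memT_iSup_single 0 (E 0)) (memT_iSup_single 1 (E 1))
    have hsum : ((f, D, E) : MelV n F) = (f, 0, 0) + (0, D, 0) + (0, 0, E) := by
      refine Prod.ext ?_ (Prod.ext ?_ ?_) <;> simp
    rw [hsum]
    exact add_mem (add_mem (memO_iSup f) hD) hE
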